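/- If G is an extendable PDAG and G' is obtained from G by applying one of Meek's rules R1–R4 (orienting one undirected edge), then G' is a PDAG (in particular acyclic), G' is extendable, and the set of consistent extensions of G' equals the set of consistent extensions of G. -/

import Mathlib

/-- A partially directed graph: arcs `A` and undirected edges `E`,
with at most one edge between any pair of vertices. -/
structure PDGraph (V : Type*) where
  A : V → V → Prop
  E : V → V → Prop
  E_symm : ∀ u v, E u v → E v u
  A_irrefl : ∀ v, ¬ A v v
  E_irrefl : ∀ v, ¬ E v v
  no_two_cycle : ∀ u v, A u v → ¬ A v u
  not_both : ∀ u v, A u v → ¬ E u v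

namespace PDGraph

variable {V : Type*}

/-- No directed cycle: a partially directed graph satisfying this is a PDAG. -/
def acyclic (G : PDGraph V) : Prop := ∀ v, ¬ Relation.TransGen G.A v v

/-- `u` and `v` are adjacent. -/
def adj (G : PDGraph V) (u v : V) : Prop := G.A u v ∨ G.A v u ∨ G.E u v

/-- `v` is a potential-sink: no children, and every sibling of `v` is
adjacent to all other neighbors of `v`. -/
def potentialSink (G : PDGraph V) (v : V) : Prop :=
  (∀ x, ¬ G.A v x) ∧ ∀ y, G.E y v → ∀ z, G.adj z v → z ≠ y → G.adj y z

/-- A v-structure `u → m ← w` with `u`, `w` non-adjacent. -/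
def vStructure (G : PDGraph V) (u m w : V) : Prop :=
  G.A u m ∧ G.A w m ∧ u ≠ w ∧ ¬ G.adj u w

/-- A DAG: acyclic with no undirected edges. -/
def isDAG (G : PDGraph V) : Prop := G.acyclic ∧ ∀ u v, ¬ G.E u v

/-- `D` is a consistent extension of `G`. -/
def consExt (D G : PDGraph V) : Prop :=
  D.isDAG ∧ (∀ u v, D.adj u v ↔ G.adj u v) ∧ (∀ u v, G.A u v → D.A u v) ∧
  (∀ u m w, D.vStructure u m w ↔ G.vStructure u m w)

/-- `G` is extendable. -/
def extendable (G : PDGraph V) : Prop := ∃ D : PDGraph V, consExt D G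

/-- Induced subgraph on a vertex set `S`. -/
def induce (G : PDGraph V) (S : Set V) : PDGraph S where
  A a b := G.A a b
  E a b := G.E a b
  E_symm := fun u v h => G.E_symm u v h
  A_irrefl := fun v => G.A_irrefl v
  E_irrefl := fun v => G.E_irrefl v
  no_two_cycle := fun u v h => G.no_two_cycle u v h
  not_both := fun u v h => G.not_both u v h

end PDGraph

open PDGraph

/-- `G'` is obtained from `G` by orienting the undirected edge `p − q` as
`p → q` (all other edges unchanged). -/
def orients {V : Type*} (G G' : PDGraph V) (p q : V) : Prop :=
  G.E p q ∧ (∀ x y, G'.A x y ↔ G.A x y ∨ (x = p ∧ y = q)) ∧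
  (∀ x y, G'.E x y ↔ G.E x y ∧ ¬(x = p ∧ y = q) ∧ ¬(x = q ∧ y = p))

/-- `G'` is obtained from `G` by a single application of one of Meek's rules
R1–R4. -/
def meekStep {V : Type*} (G G' : PDGraph V) : Prop :=
  (∃ a b c, G.A a b ∧ G.E b c ∧ ¬ G.adj a c ∧ orients G G' b c) ∨
  (∃ a b c, G.A a b ∧ G.A b c ∧ G.E a c ∧ orients G G' a c) ∨
  (∃ a b c d, G.E a b ∧ G.E a d ∧ G.E a c ∧ G.A b c ∧ G.A d c ∧
    b ≠ d ∧ ¬ G.adj b d ∧ orients G G' a c) ∨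
  (∃ a b c d, G.E a b ∧ G.E a c ∧ G.E a d ∧ G.A d c ∧ G.A c b ∧
    b ≠ d ∧ ¬ G.adj b d ∧ orients G G' a b)

/-- No Meek rule is applicable in `M`. -/
def meekClosed {V : Type*} (M : PDGraph V) : Prop :=
  (¬ ∃ a b c, M.A a b ∧ M.E b c ∧ ¬ M.adj a c) ∧
  (¬ ∃ a b c, M.A a b ∧ M.A b c ∧ M.E a c) ∧
  (¬ ∃ a b c d, M.E a b ∧ M.E a d ∧ M.E a c ∧ M.A b c ∧ M.A d c ∧
    b ≠ d ∧ ¬ M.adj b d) ∧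
  (¬ ∃ a b c d, M.E a b ∧ M.E a c ∧ M.E a d ∧ M.A d c ∧ M.A c b ∧
    b ≠ d ∧ ¬ M.adj b d)

section Aux

variable {V : Type*}

lemma dag_adj {D : PDGraph V} (hD : D.isDAG) {u v : V} (h : D.adj u v) :
    D.A u v ∨ D.A v u := by
  rcases h with h | h | h
  · exact Or.inl h
  · exact Or.inr h
  · exact absurd h (hD.2 u v)

lemma orient_main (G G' : PDGraph V) (p q : V) (hor : orients G G' p q)
    (hforced : ∀ D : PDGraph V, D.consExt G → D.A p q)
    (hext : G.extendable) :
    G'.acyclic ∧ G'.extendable ∧ ∀ D : PDGraph V, D.consExt G' ↔ D.consExt G := by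
  obtain ⟨hEpq, hA', hE'⟩ := hor
  obtain ⟨D0, hD0⟩ := hext
  have hpq0 : D0.A p q := hforced D0 hD0
  have hnApq : ¬ G.A p q := fun h => G.not_both p q h hEpq
  have hadjeq : ∀ u v, G'.adj u v ↔ G.adj u v := by
    intro u v
    constructor
    · rintro (h | h | h)
      · rcases (hA' u v).1 h with h | ⟨rfl, rfl⟩
        · exact Or.inl h
        · exact Or.inr (Or.inr hEpq)
      · rcases (hA' v u).1 h with h | ⟨rfl, rfl⟩
        · exact Or.inr (Or.inl h)
        · exact Or.inr (Or.inr (G.E_symm v u hEpq))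
      · exact Or.inr (Or.inr ((hE' u v).1 h).1)
    · rintro (h | h | h)
      · exact Or.inl ((hA' u v).2 (Or.inl h))
      · exact Or.inr (Or.inl ((hA' v u).2 (Or.inl h)))
      · by_cases h1 : u = p ∧ v = q
        · exact Or.inl ((hA' u v).2 (Or.inr h1))
        · by_cases h2 : u = q ∧ v = p
          · exact Or.inr (Or.inl ((hA' v u).2 (Or.inr ⟨h2.2, h2.1⟩)))
          · exact Or.inr (Or.inr ((hE' u v).2 ⟨h, h1, h2⟩))
  have hvseq : ∀ u m w, G'.vStructure u m w ↔ G.vStructure u m w := by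
    intro u m w
    obtain ⟨hdag0, hadj0, harc0, hvs0⟩ := hD0
    constructor
    · rintro ⟨h1, h2, hne, hnadj⟩
      have hnadjG : ¬ G.adj u w := fun h => hnadj ((hadjeq u w).2 h)
      rcases (hA' u m).1 h1 with h1' | ⟨rfl, rfl⟩
      · rcases (hA' w m).1 h2 with h2' | ⟨rfl, rfl⟩
        · exact ⟨h1', h2', hne, hnadjG⟩
        · exfalso
          have hvD : D0.vStructure u m w :=
            ⟨harc0 u m h1', hpq0, hne, fun h => hnadjG ((hadj0 u w).1 h)⟩
          exact hnApq ((hvs0 u m w).1 hvD).2.1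
      · exfalso
        rcases (hA' w m).1 h2 with h2' | ⟨rfl, -⟩
        · have hvD : D0.vStructure u m w :=
            ⟨hpq0, harc0 w m h2', hne, fun h => hnadjG ((hadj0 u w).1 h)⟩
          exact hnApq ((hvs0 u m w).1 hvD).1
        · exact hne rfl
    · rintro ⟨h1, h2, hne, hnadj⟩
      exact ⟨(hA' u m).2 (Or.inl h1), (hA' w m).2 (Or.inl h2), hne,
        fun h => hnadj ((hadjeq u w).1 h)⟩
  have ext_of : ∀ D : PDGraph V, D.consExt G → D.consExt G' := by
    intro D hD
    obtain ⟨hdag, hadj, harc, hvs⟩ := hD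
    refine ⟨hdag, fun u v => (hadj u v).trans (hadjeq u v).symm, ?_,
      fun u m w => (hvs u m w).trans (hvseq u m w).symm⟩
    intro u v h
    rcases (hA' u v).1 h with h | ⟨rfl, rfl⟩
    · exact harc u v h
    · exact hforced D ⟨hdag, hadj, harc, hvs⟩
  have hD0' := ext_of D0 hD0
  refine ⟨?_, ⟨D0, hD0'⟩, ?_⟩
  · intro v hv
    exact hD0'.1.1 v (Relation.TransGen.mono hD0'.2.2.1 v v hv)
  · intro D
    constructor
    · rintro ⟨hdag, hadj, harc, hvs⟩
      exact ⟨hdag, fun u v => (hadj u v).trans (hadjeq u v),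
        fun u v h => harc u v ((hA' u v).2 (Or.inl h)),
        fun u m w => (hvs u m w).trans (hvseq u m w)⟩
    · exact ext_of D

end Aux

/-- Applying one Meek rule to an extendable PDAG yields an acyclic (hence PDAG),
extendable graph with the same set of consistent extensions. -/
theorem stmt_15 {V : Type*} (G : PDGraph V) (hG : G.acyclic)
    (hext : G.extendable) (G' : PDGraph V) (hstep : meekStep G G') :
    G'.acyclic ∧ G'.extendable ∧ ∀ D : PDGraph V, D.consExt G' ↔ D.consExt G := by
  rcases hstep with ⟨a, b, c, hab, hbc, hnadj, hor⟩ |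
    ⟨a, b, c, hab, hbc, hac, hor⟩ |
    ⟨a, b, c, d, hab, had, hac, hbc, hdc, hbd, hnadj, hor⟩ |
    ⟨a, b, c, d, hab, hac, had, hdc, hcb, hbd, hnadj, hor⟩
  · -- R1: orient b → c
    refine orient_main G G' b c hor ?_ hext
    rintro D ⟨hdag, hadj, harc, hvs⟩
    rcases dag_adj hdag ((hadj b c).2 (Or.inr (Or.inr hbc))) with h | h
    · exact h
    · exfalso
      have hac_ne : a ≠ c := by
        rintro rfl
        exact G.not_both a b hab (G.E_symm b a hbc)
      have hvD : D.vStructure a b c :=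
        ⟨harc a b hab, h, hac_ne, fun hx => hnadj ((hadj a c).1 hx)⟩
      exact G.not_both c b ((hvs a b c).1 hvD).2.1 (G.E_symm b c hbc)
  · -- R2: orient a → c
    refine orient_main G G' a c hor ?_ hext
    rintro D ⟨hdag, hadj, harc, hvs⟩
    rcases dag_adj hdag ((hadj a c).2 (Or.inr (Or.inr hac))) with h | h
    · exact h
    · exact absurd ((Relation.TransGen.head (harc a b hab)
        (Relation.TransGen.single (harc b c hbc))).tail h) (hdag.1 a)
  · -- R3: orient a → c
    refine orient_main G G' a c hor ?_ hext
    rintro D ⟨hdag, hadj, harc, hvs⟩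
    rcases dag_adj hdag ((hadj a c).2 (Or.inr (Or.inr hac))) with h | hca
    · exact h
    · exfalso
      have hba : D.A b a := by
        rcases dag_adj hdag ((hadj a b).2 (Or.inr (Or.inr hab))) with h' | h'
        · exact absurd ((Relation.TransGen.head h'
            (Relation.TransGen.single (harc b c hbc))).tail hca) (hdag.1 a)
        · exact h'
      have hda : D.A d a := by
        rcases dag_adj hdag ((hadj a d).2 (Or.inr (Or.inr had))) with h' | h'
        · exact absurd ((Relation.TransGen.head h'
            (Relation.TransGen.single (harc d c hdc))).tail hca) (hdag.1 a)
        · exact h'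
      have hvD : D.vStructure b a d :=
        ⟨hba, hda, hbd, fun hx => hnadj ((hadj b d).1 hx)⟩
      exact G.not_both b a ((hvs b a d).1 hvD).1 (G.E_symm a b hab)
  · -- R4: orient a → b
    refine orient_main G G' a b hor ?_ hext
    rintro D ⟨hdag, hadj, harc, hvs⟩
    rcases dag_adj hdag ((hadj a b).2 (Or.inr (Or.inr hab))) with h | hba
    · exact h
    · exfalso
      have hda : D.A d a := by
        rcases dag_adj hdag ((hadj a d).2 (Or.inr (Or.inr had))) with h' | h'
        · exact absurd ((Relation.TransGen.head h'
            (Relation.TransGen.head (harc d c hdc)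
              (Relation.TransGen.single (harc c b hcb)))).tail hba) (hdag.1 a)
        · exact h'
      have hvD : D.vStructure b a d :=
        ⟨hba, hda, hbd, fun hx => hnadj ((hadj b d).1 hx)⟩
      exact G.not_both b a ((hvs b a d).1 hvD).1 (G.E_symm a b hab)
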